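/- Let f : ℤ² → ℂ satisfy f(n) = λ_σ^n := λ_{σ,1}^{|n₁|} λ_{σ,2}^{|n₂|} for n in the (half-open) quadrant indexed by σ, with λ_σ ∈ 𝔻² and λ_{σ,1}·λ_{σ,2} ≠ 0 for some σ. Let (λ_n)_{n∈ℕ} enumerate the multiset {f(n) : n ∈ ℤ²} in order of decreasing modulus. Then lim_{n→∞} (−log|λ_n|)/√n = η₂, where η₂ = ( (1/2) ∑_{σ : λ_{σ,1}λ_{σ,2} ≠ 0} (log|λ_{σ,1}| · log|λ_{σ,2}|)^{-1} )^{-1/2}. -/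

import Mathlib

open scoped Classical
open Finset Filter

/-- signed embedding of ℕ into ℤ, `true` ↦ nonneg, `false` ↦ neg. -/
def stmt13e2 (s : Bool) (u : ℕ) : ℤ := if s then (u : ℤ) else -(u + 1)

lemma stmt13e2_decide (s : Bool) (u : ℕ) : decide (0 ≤ stmt13e2 s u) = s := by
  cases s <;> simp [stmt13e2] <;> omega

lemma stmt13e2_natAbs (s : Bool) (u : ℕ) :
    (stmt13e2 s u).natAbs = if s then u else u + 1 := by
  cases s <;> simp [stmt13e2] <;> omega

def stmt13dd (n : ℤ) : ℕ := if 0 ≤ n then n.toNat else (-n - 1).toNat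

lemma stmt13dd_le (n : ℤ) : stmt13dd n ≤ n.natAbs := by
  unfold stmt13dd; split <;> omega

def stmt13Phi (p : Σ _ : Bool × Bool, ℕ × ℕ) : ℤ × ℤ :=
  (stmt13e2 p.1.1 p.2.1, stmt13e2 p.1.2 p.2.2)

def stmt13Psi (m : ℤ × ℤ) : Σ _ : Bool × Bool, ℕ × ℕ :=
  ⟨(decide (0 ≤ m.1), decide (0 ≤ m.2)), (stmt13dd m.1, stmt13dd m.2)⟩

lemma stmt13e2_dd (n : ℤ) : stmt13e2 (decide (0 ≤ n)) (stmt13dd n) = n := by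
  unfold stmt13e2 stmt13dd
  by_cases h : 0 ≤ n <;> simp [h] <;> omega

lemma stmt13dd_e2 (s : Bool) (u : ℕ) : stmt13dd (stmt13e2 s u) = u := by
  cases s <;> simp [stmt13dd, stmt13e2] <;> omega

lemma stmt13Phi_Psi (m : ℤ × ℤ) : stmt13Phi (stmt13Psi m) = m := by
  simp [stmt13Phi, stmt13Psi, stmt13e2_dd]

lemma stmt13Psi_Phi (p : Σ _ : Bool × Bool, ℕ × ℕ) : stmt13Psi (stmt13Phi p) = p := by
  obtain ⟨⟨s₁, s₂⟩, u, v⟩ := p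
  simp [stmt13Psi, stmt13Phi, stmt13e2_decide, stmt13dd_e2]
  exact ⟨stmt13e2_decide _ _, stmt13e2_decide _ _⟩

lemma stmt13Psi_inj : Function.Injective stmt13Psi :=
  Function.LeftInverse.injective stmt13Phi_Psi

lemma stmt13Phi_inj : Function.Injective stmt13Phi :=
  Function.LeftInverse.injective stmt13Psi_Phi

noncomputable def stmt13T (a b y : ℝ) : Finset (ℕ × ℕ) :=
  (range (⌊y / a⌋₊ + 1) ×ˢ range (⌊y / b⌋₊ + 1)).filter
    (fun p => a * p.1 + b * p.2 ≤ y)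

lemma stmt13T_mem {a b : ℝ} (ha : 0 < a) (hb : 0 < b) {y : ℝ} {p : ℕ × ℕ} :
    p ∈ stmt13T a b y ↔ a * p.1 + b * p.2 ≤ y := by
  constructor
  · intro h; exact (mem_filter.mp h).2
  · intro h
    have h1 : a * p.1 ≤ y := by nlinarith [mul_nonneg hb.le (Nat.cast_nonneg (α := ℝ) p.2)]
    have h2 : b * p.2 ≤ y := by nlinarith [mul_nonneg ha.le (Nat.cast_nonneg (α := ℝ) p.1)]
    refine mem_filter.mpr ⟨mem_product.mpr ⟨?_, ?_⟩, h⟩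
    · rw [mem_range, Nat.lt_succ_iff]
      exact Nat.le_floor ((le_div_iff₀ ha).mpr (by linarith [mul_comm a ((p.1:ℝ))]))
    · rw [mem_range, Nat.lt_succ_iff]
      exact Nat.le_floor ((le_div_iff₀ hb).mpr (by linarith [mul_comm b ((p.2:ℝ))]))

lemma stmt13T_card {a b : ℝ} (ha : 0 < a) (hb : 0 < b) {y : ℝ} (hy : 0 ≤ y) :
    (stmt13T a b y).card = ∑ u ∈ range (⌊y / a⌋₊ + 1), (⌊(y - a * u) / b⌋₊ + 1) := by
  rw [stmt13T, card_filter, sum_product]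
  refine sum_congr rfl fun u hu => ?_
  have hau : a * u ≤ y := by
    rw [mem_range, Nat.lt_succ_iff] at hu
    have : (u : ℝ) ≤ y / a := le_trans (by exact_mod_cast hu) (Nat.floor_le (by positivity))
    calc a * u ≤ a * (y / a) := by nlinarith
    _ = y := by field_simp
  have hfil : (range (⌊y / b⌋₊ + 1)).filter (fun v : ℕ => a * u + b * v ≤ y)
      = range (⌊(y - a * u) / b⌋₊ + 1) := by
    ext v
    simp only [mem_filter, mem_range, Nat.lt_succ_iff]
    constructor
    · rintro ⟨_, h⟩
      exact Nat.le_floor ((le_div_iff₀ hb).mpr (by linarith [mul_comm b ((v:ℝ))]))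
    · intro h
      have hv : (v : ℝ) ≤ (y - a * u) / b :=
        le_trans (by exact_mod_cast h) (Nat.floor_le (div_nonneg (by linarith) hb.le))
      have hv2 : b * v ≤ y - a * u := by
        rw [le_div_iff₀ hb] at hv; linarith [mul_comm ((v:ℝ)) b]
      refine ⟨Nat.le_floor ((le_div_iff₀ hb).mpr ?_), by linarith⟩
      linarith [mul_comm ((v:ℝ)) b, mul_nonneg ha.le (Nat.cast_nonneg (α := ℝ) u)]
  calc (∑ v ∈ range (⌊y / b⌋₊ + 1), if a * ((u, v).1 : ℕ) + b * ((u, v).2 : ℕ) ≤ y then 1 else 0)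
      = ((range (⌊y / b⌋₊ + 1)).filter (fun v : ℕ => a * u + b * v ≤ y)).card :=
        (card_filter _ _).symm
    _ = (range (⌊(y - a * u) / b⌋₊ + 1)).card := by rw [hfil]
    _ = ⌊(y - a * u) / b⌋₊ + 1 := card_range _

lemma stmt13T_gauss (U : ℕ) : (∑ u ∈ range (U + 1), (u : ℝ)) * 2 = (U + 1) * U := by
  have h := Finset.sum_range_id_mul_two (U + 1)
  rw [Nat.add_sub_cancel] at h
  rw [← Nat.cast_sum]
  exact_mod_cast h

lemma stmt13T_low {a b : ℝ} (ha : 0 < a) (hb : 0 < b) {y : ℝ} (hy : 0 ≤ y) :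
    y ^ 2 / (2 * a * b) ≤ ((stmt13T a b y).card : ℝ) := by
  set U := ⌊y / a⌋₊ with hU
  have haU : a * U ≤ y := by
    have h := Nat.floor_le (show 0 ≤ y / a by positivity)
    calc a * U ≤ a * (y / a) := by rw [hU]; nlinarith
    _ = y := by field_simp
  have hUy : y < a * (U + 1) := by
    have h := Nat.lt_floor_add_one (y / a)
    rw [div_lt_iff₀ ha] at h
    rw [hU]; push_cast at h ⊢; linarith [mul_comm (y / a) a]
  have hcard : ((stmt13T a b y).card : ℝ)
      = ∑ u ∈ range (U + 1), ((⌊(y - a * u) / b⌋₊ : ℝ) + 1) := by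
    rw [stmt13T_card ha hb hy, Nat.cast_sum]
    exact sum_congr rfl fun u _ => by push_cast; ring
  rw [hcard]
  have hsum : ∑ u ∈ range (U + 1), (y - a * u) / b
      ≤ ∑ u ∈ range (U + 1), ((⌊(y - a * u) / b⌋₊ : ℝ) + 1) :=
    sum_le_sum fun u _ => (Nat.lt_floor_add_one _).le
  refine le_trans ?_ hsum
  have hsum2 : ∑ u ∈ range (U + 1), (y - a * u) / b
      = ((U + 1) * y - a * ((U + 1) * U / 2)) / b := by
    rw [← sum_div]
    congr 1
    rw [sum_sub_distrib, sum_const, card_range, ← mul_sum,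
      show (∑ u ∈ range (U + 1), (u:ℝ)) = (U + 1) * U / 2 by linarith [stmt13T_gauss U]]
    push_cast; ring
  rw [hsum2, div_le_div_iff₀ (by positivity) hb]
  have hcore : y ^ 2 ≤ 2 * a * ((U + 1) * y - a * ((U + 1) * U / 2)) := by
    nlinarith [sq_nonneg (y - a * U - a), mul_nonneg ha.le (Nat.cast_nonneg (α := ℝ) U)]
  nlinarith [mul_le_mul_of_nonneg_right hcore hb.le]

lemma stmt13T_up {a b : ℝ} (ha : 0 < a) (hb : 0 < b) {y : ℝ} (hy : 0 ≤ y) :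
    ((stmt13T a b y).card : ℝ) ≤ (y + (a + 2 * b)) ^ 2 / (2 * a * b) := by
  set U := ⌊y / a⌋₊ with hU
  have haU : a * U ≤ y := by
    have h := Nat.floor_le (show 0 ≤ y / a by positivity)
    calc a * U ≤ a * (y / a) := by rw [hU]; nlinarith
    _ = y := by field_simp
  have hUy : y < a * (U + 1) := by
    have h := Nat.lt_floor_add_one (y / a)
    rw [div_lt_iff₀ ha] at h
    rw [hU]; push_cast at h ⊢; linarith [mul_comm (y / a) a]
  have hcard : ((stmt13T a b y).card : ℝ)
      = ∑ u ∈ range (U + 1), ((⌊(y - a * u) / b⌋₊ : ℝ) + 1) := by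
    rw [stmt13T_card ha hb hy, Nat.cast_sum]
    exact sum_congr rfl fun u _ => by push_cast; ring
  rw [hcard]
  have hterm : ∀ u ∈ range (U + 1), ((⌊(y - a * u) / b⌋₊ : ℝ) + 1) ≤ (y - a * u) / b + 1 := by
    intro u hu
    rw [mem_range, Nat.lt_succ_iff] at hu
    have hau : a * u ≤ y := by
      have h1 : (u : ℝ) ≤ U := by exact_mod_cast hu
      nlinarith
    have h0 : (0:ℝ) ≤ (y - a * u) / b := div_nonneg (by linarith) hb.le
    have := Nat.floor_le h0
    linarith
  refine (sum_le_sum hterm).trans ?_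
  have hsum2 : ∑ u ∈ range (U + 1), ((y - a * u) / b + 1)
      = ((U + 1) * y - a * ((U + 1) * U / 2)) / b + (U + 1) := by
    rw [sum_add_distrib, ← sum_div, sum_const, card_range]
    have h1 : (U + 1) • (1:ℝ) = (U:ℝ) + 1 := by
      rw [nsmul_eq_mul]; push_cast; ring
    rw [h1]
    congr 1
    rw [sum_sub_distrib, sum_const, card_range, ← mul_sum,
      show (∑ u ∈ range (U + 1), (u:ℝ)) = (U + 1) * U / 2 by linarith [stmt13T_gauss U]]
    push_cast; ring
  rw [hsum2]
  have core : 2 * a * ((U + 1) * y - a * ((U + 1) * U / 2)) + 2 * a * b * (U + 1)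
      ≤ (y + (a + 2 * b)) ^ 2 := by
    nlinarith [sq_nonneg (y - a * U), mul_pos ha hb,
      mul_nonneg ha.le (Nat.cast_nonneg (α := ℝ) U),
      mul_nonneg hb.le (mul_nonneg ha.le (Nat.cast_nonneg (α := ℝ) U)), sq_nonneg b]
  rw [div_add' _ _ _ hb.ne', div_le_div_iff₀ hb (by positivity)]
  nlinarith [mul_le_mul_of_nonneg_left core hb.le]

noncomputable def stmt13a (l : Bool × Bool → ℂ × ℂ) (σ : Bool × Bool) : ℝ :=
  -Real.log (‖(l σ).1‖)

noncomputable def stmt13b (l : Bool × Bool → ℂ × ℂ) (σ : Bool × Bool) : ℝ :=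
  -Real.log (‖(l σ).2‖)

noncomputable def stmt13F (l : Bool × Bool → ℂ × ℂ) (m : ℤ × ℤ) : ℝ :=
  stmt13a l (decide (0 ≤ m.1), decide (0 ≤ m.2)) * m.1.natAbs +
  stmt13b l (decide (0 ≤ m.1), decide (0 ≤ m.2)) * m.2.natAbs

lemma stmt13F_nonneg (l : Bool × Bool → ℂ × ℂ) (ha : ∀ σ, 0 ≤ stmt13a l σ)
    (hb : ∀ σ, 0 ≤ stmt13b l σ) (m : ℤ × ℤ) : 0 ≤ stmt13F l m :=
  add_nonneg (mul_nonneg (ha _) (Nat.cast_nonneg _)) (mul_nonneg (hb _) (Nat.cast_nonneg _))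

lemma stmt13_log (l : Bool × Bool → ℂ × ℂ) (hz : ∀ σ, (l σ).1 ≠ 0 ∧ (l σ).2 ≠ 0)
    (m : ℤ × ℤ) :
    -Real.log (‖(l (decide (0 ≤ m.1), decide (0 ≤ m.2))).1 ^ m.1.natAbs *
      (l (decide (0 ≤ m.1), decide (0 ≤ m.2))).2 ^ m.2.natAbs‖) = stmt13F l m := by
  set σ := ((decide (0 ≤ m.1), decide (0 ≤ m.2)) : Bool × Bool) with hσ
  have h1 : ‖(l σ).1‖ ≠ 0 := by
    simpa using (hz σ).1
  have h2 : ‖(l σ).2‖ ≠ 0 := by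
    simpa using (hz σ).2
  rw [norm_mul, norm_pow, norm_pow,
    Real.log_mul (pow_ne_zero _ h1) (pow_ne_zero _ h2), Real.log_pow, Real.log_pow]
  unfold stmt13F stmt13a stmt13b
  rw [← hσ]
  ring

lemma stmt13_Psi_le (l : Bool × Bool → ℂ × ℂ) (ha : ∀ σ, 0 ≤ stmt13a l σ)
    (hb : ∀ σ, 0 ≤ stmt13b l σ) (m : ℤ × ℤ) :
    stmt13a l (stmt13Psi m).1 * ((stmt13Psi m).2.1 : ℝ) +
      stmt13b l (stmt13Psi m).1 * ((stmt13Psi m).2.2 : ℝ) ≤ stmt13F l m := by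
  have e1 : (stmt13Psi m).1 = ((decide (0 ≤ m.1), decide (0 ≤ m.2)) : Bool × Bool) := rfl
  unfold stmt13F
  rw [e1]
  have d1 : ((stmt13Psi m).2.1 : ℝ) ≤ (m.1.natAbs : ℝ) := by
    exact_mod_cast Nat.cast_le.mpr (stmt13dd_le m.1)
  have d2 : ((stmt13Psi m).2.2 : ℝ) ≤ (m.2.natAbs : ℝ) := by
    exact_mod_cast Nat.cast_le.mpr (stmt13dd_le m.2)
  have := ha ((decide (0 ≤ m.1), decide (0 ≤ m.2)) : Bool × Bool)
  have := hb ((decide (0 ≤ m.1), decide (0 ≤ m.2)) : Bool × Bool)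
  nlinarith [Nat.cast_nonneg (α := ℝ) (stmt13Psi m).2.1, Nat.cast_nonneg (α := ℝ) (stmt13Psi m).2.2]

lemma stmt13_F_Phi_le (l : Bool × Bool → ℂ × ℂ) (ha : ∀ σ, 0 ≤ stmt13a l σ)
    (hb : ∀ σ, 0 ≤ stmt13b l σ) (σ : Bool × Bool) (p : ℕ × ℕ) :
    stmt13F l (stmt13Phi ⟨σ, p⟩) ≤
      stmt13a l σ * p.1 + stmt13b l σ * p.2 + (stmt13a l σ + stmt13b l σ) := by
  obtain ⟨s₁, s₂⟩ := σ
  unfold stmt13F stmt13Phi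
  simp only [stmt13e2_decide, stmt13e2_natAbs]
  split_ifs <;> push_cast <;> nlinarith [ha (s₁, s₂), hb (s₁, s₂)]


/-- a cone-wise exponential function on `ℤ²` (with values `λ_σ^{|n|}`
on the four half-open quadrants), if some `λ_{σ,1}λ_{σ,2} ≠ 0`, has its
modulus-decreasing enumeration decaying stretched-exponentially with rate
`η₂ = ((1/2) ∑_{σ : λ_{σ,1}λ_{σ,2} ≠ 0} (log|λ_{σ,1}| log|λ_{σ,2}|)⁻¹)^{-1/2}`. -/
theorem stmt13 (l : Bool × Bool → ℂ × ℂ)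
    (hl : ∀ σ, ‖(l σ).1‖ < 1 ∧ ‖(l σ).2‖ < 1)
    (hne : ∃ σ, (l σ).1 * (l σ).2 ≠ 0)
    (f : ℤ × ℤ → ℂ)
    (hf : ∀ n : ℤ × ℤ,
      f n = (l (decide (0 ≤ n.1), decide (0 ≤ n.2))).1 ^ n.1.natAbs *
            (l (decide (0 ≤ n.1), decide (0 ≤ n.2))).2 ^ n.2.natAbs)
    (e : ℕ ≃ ℤ × ℤ) (s : ℕ → ℂ) (hs : ∀ k, s k = f (e k))
    (hmono : Antitone fun k => ‖s k‖) :
    Filter.Tendsto (fun k : ℕ => -Real.log ‖s k‖ / Real.sqrt k)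
      Filter.atTop
      (nhds ((Real.sqrt ((1 / 2) * ∑ σ : Bool × Bool,
        if (l σ).1 * (l σ).2 ≠ 0 then
          (Real.log ‖(l σ).1‖ * Real.log ‖(l σ).2‖)⁻¹
        else 0))⁻¹) ) := by
  classical
  -- Step 1: every component of every `l σ` is nonzero
  have hz : ∀ σ, (l σ).1 ≠ 0 ∧ (l σ).2 ≠ 0 := by
    by_contra hcon
    push_neg at hcon
    obtain ⟨σ0, himp⟩ := hcon
    have h0 : (l σ0).1 = 0 ∨ (l σ0).2 = 0 := by
      by_cases h : (l σ0).1 = 0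
      · exact Or.inl h
      · exact Or.inr (himp h)
    obtain ⟨σ1, h1⟩ := hne
    obtain ⟨h11, h12⟩ := mul_ne_zero_iff.mp h1
    have hlabel : ∀ (σ : Bool × Bool) (p : ℕ × ℕ),
        ((decide (0 ≤ (stmt13Phi ⟨σ, p⟩).1), decide (0 ≤ (stmt13Phi ⟨σ, p⟩).2)) : Bool × Bool)
          = σ := by
      intro σ p
      show ((decide (0 ≤ stmt13e2 σ.1 p.1), decide (0 ≤ stmt13e2 σ.2 p.2)) : Bool × Bool) = σ
      rw [stmt13e2_decide, stmt13e2_decide]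
    have hP0 : f (stmt13Phi ⟨σ0, (1, 1)⟩) = 0 := by
      rw [hf, hlabel]
      have hn1 : (stmt13Phi ⟨σ0, (1, 1)⟩).1.natAbs ≠ 0 := by
        show (stmt13e2 σ0.1 1).natAbs ≠ 0
        rw [stmt13e2_natAbs]; split <;> omega
      have hn2 : (stmt13Phi ⟨σ0, (1, 1)⟩).2.natAbs ≠ 0 := by
        show (stmt13e2 σ0.2 1).natAbs ≠ 0
        rw [stmt13e2_natAbs]; split <;> omega
      rcases h0 with h | h
      · rw [h, zero_pow hn1, zero_mul]
      · rw [h, zero_pow hn2, mul_zero]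
    have hk0 : ‖s (e.symm (stmt13Phi ⟨σ0, (1, 1)⟩))‖ = 0 := by
      rw [hs, Equiv.apply_symm_apply, hP0, norm_zero]
    have hlater : ∀ k, e.symm (stmt13Phi ⟨σ0, (1, 1)⟩) ≤ k → f (e k) = 0 := by
      intro k hk
      have h2 : ‖s k‖ ≤ ‖s (e.symm (stmt13Phi ⟨σ0, (1, 1)⟩))‖ :=
        hmono hk
      rw [hk0] at h2
      have h3 : ‖s k‖ = 0 := le_antisymm h2 (norm_nonneg _)
      have h4 := norm_eq_zero.mp h3
      rw [hs] at h4
      exact h4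
    have hmem : ∀ u : ℕ, e.symm (stmt13Phi ⟨σ1, (u, u)⟩)
        ∈ Set.Iio (e.symm (stmt13Phi ⟨σ0, (1, 1)⟩)) := by
      intro u
      by_contra hge
      simp only [Set.mem_Iio, not_lt] at hge
      have h5 := hlater _ hge
      rw [Equiv.apply_symm_apply, hf, hlabel] at h5
      exact mul_ne_zero (pow_ne_zero _ h11) (pow_ne_zero _ h12) h5
    have hinj : Function.Injective (fun u : ℕ => e.symm (stmt13Phi ⟨σ1, (u, u)⟩)) := by
      intro u v huv
      have h6 := stmt13Phi_inj (e.symm.injective huv)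
      simpa using congrArg (fun q => q.2.1) h6
    exact (Set.finite_Iio _).not_infinite (Set.infinite_of_injective_forall_mem hinj hmem)
  have ha : ∀ σ, 0 < stmt13a l σ := by
    intro σ
    have h1 : 0 < ‖(l σ).1‖ := norm_pos_iff.mpr (hz σ).1
    have h2 := (hl σ).1
    have := Real.log_neg h1 h2
    unfold stmt13a; linarith
  have hb : ∀ σ, 0 < stmt13b l σ := by
    intro σ
    have h1 : 0 < ‖(l σ).2‖ := norm_pos_iff.mpr (hz σ).2
    have h2 := (hl σ).2
    have := Real.log_neg h1 h2
    unfold stmt13b; linarith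
  have hfne : ∀ m, f m ≠ 0 := fun m => by
    rw [hf]; exact mul_ne_zero (pow_ne_zero _ (hz _).1) (pow_ne_zero _ (hz _).2)
  set g : ℕ → ℝ := fun k => stmt13F l (e k) with hg_def
  have hflog : ∀ k, -Real.log (‖s k‖) = g k := by
    intro k
    rw [hs, hf]
    exact stmt13_log l hz (e k)
  have hgmono : Monotone g := by
    intro j k hjk
    have h1 : ‖s k‖ ≤ ‖s j‖ := hmono hjk
    have h2 : 0 < ‖s k‖ := norm_pos_iff.mpr (by rw [hs]; exact hfne _)
    have h3 := Real.log_le_log h2 h1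
    have h4 := hflog j
    have h5 := hflog k
    linarith
  have hg0 : ∀ k, 0 ≤ g k := fun k =>
    stmt13F_nonneg l (fun σ => (ha σ).le) (fun σ => (hb σ).le) (e k)
  set c : ℝ := (1 / 2) * ∑ σ : Bool × Bool, (stmt13a l σ * stmt13b l σ)⁻¹ with hc_def
  have hc : 0 < c := by
    rw [hc_def]
    have h1 : 0 < ∑ σ : Bool × Bool, (stmt13a l σ * stmt13b l σ)⁻¹ :=
      Finset.sum_pos (fun σ _ => by
        have := ha σ; have := hb σ; positivity) Finset.univ_nonempty
    linarith
  set K : ℝ := ∑ σ : Bool × Bool, (stmt13a l σ + stmt13b l σ) with hK_def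
  set B : ℝ := ∑ σ : Bool × Bool, (stmt13a l σ + 2 * stmt13b l σ) with hB_def
  have hK0 : 0 ≤ K := Finset.sum_nonneg fun σ _ => by
    have := ha σ; have := hb σ; positivity
  have hB0 : 0 ≤ B := Finset.sum_nonneg fun σ _ => by
    have := ha σ; have := hb σ; positivity
  have hKσ : ∀ σ : Bool × Bool, stmt13a l σ + stmt13b l σ ≤ K := fun σ =>
    Finset.single_le_sum (f := fun τ => stmt13a l τ + stmt13b l τ)
      (fun τ _ => by have := ha τ; have := hb τ; positivity) (Finset.mem_univ σ)
  have hBσ : ∀ σ : Bool × Bool, stmt13a l σ + 2 * stmt13b l σ ≤ B := fun σ =>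
    Finset.single_le_sum (f := fun τ => stmt13a l τ + 2 * stmt13b l τ)
      (fun τ _ => by have := ha τ; have := hb τ; positivity) (Finset.mem_univ σ)
  have hsum_c : ∑ σ : Bool × Bool, (2 * stmt13a l σ * stmt13b l σ)⁻¹ = c := by
    rw [hc_def, Finset.mul_sum]
    refine Finset.sum_congr rfl fun σ _ => ?_
    rw [show (2 * stmt13a l σ * stmt13b l σ) = 2 * (stmt13a l σ * stmt13b l σ) by ring,
      mul_inv]
    norm_num
  -- star 1
  have star1 : ∀ (k : ℕ) (x : ℝ), g k ≤ x →
      (k + 1 : ℕ) ≤ ∑ σ : Bool × Bool, (stmt13T (stmt13a l σ) (stmt13b l σ) x).card := by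
    intro k x hkx
    have hinj : Set.InjOn (fun j => stmt13Psi (e j)) (Finset.range (k + 1)) :=
      fun u _ v _ h => e.injective (stmt13Psi_inj h)
    have hmaps : ∀ j ∈ Finset.range (k + 1),
        stmt13Psi (e j) ∈ (Finset.univ : Finset (Bool × Bool)).sigma
          (fun σ => stmt13T (stmt13a l σ) (stmt13b l σ) x) := by
      intro j hj
      rw [Finset.mem_range, Nat.lt_succ_iff] at hj
      refine Finset.mem_sigma.mpr ⟨Finset.mem_univ _, ?_⟩
      rw [stmt13T_mem (ha _) (hb _)]
      calc stmt13a l (stmt13Psi (e j)).1 * ((stmt13Psi (e j)).2.1 : ℝ)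
            + stmt13b l (stmt13Psi (e j)).1 * ((stmt13Psi (e j)).2.2 : ℝ)
          ≤ stmt13F l (e j) :=
            stmt13_Psi_le l (fun σ => (ha σ).le) (fun σ => (hb σ).le) (e j)
        _ = g j := rfl
        _ ≤ g k := hgmono hj
        _ ≤ x := hkx
    have h7 := Finset.card_le_card_of_injOn _ hmaps hinj
    rwa [Finset.card_range, Finset.card_sigma] at h7
  -- star 2
  have star2 : ∀ (k : ℕ) (x : ℝ),
      k < ∑ σ : Bool × Bool, (stmt13T (stmt13a l σ) (stmt13b l σ) (x - K)).card →
      g k ≤ x := by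
    intro k x hcard
    by_contra hgt
    push_neg at hgt
    have hmaps : ∀ p ∈ (Finset.univ : Finset (Bool × Bool)).sigma
        (fun σ => stmt13T (stmt13a l σ) (stmt13b l σ) (x - K)),
        e.symm (stmt13Phi p) ∈ Finset.range k := by
      intro p hp
      obtain ⟨-, hp2⟩ := Finset.mem_sigma.mp hp
      rw [stmt13T_mem (ha _) (hb _)] at hp2
      have hgle : g (e.symm (stmt13Phi p)) ≤ x := by
        show stmt13F l (e (e.symm (stmt13Phi p))) ≤ x
        rw [Equiv.apply_symm_apply]
        have h8 := stmt13_F_Phi_le l (fun σ => (ha σ).le) (fun σ => (hb σ).le) p.1 p.2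
        have h9 := hKσ p.1
        calc stmt13F l (stmt13Phi p) = stmt13F l (stmt13Phi ⟨p.1, p.2⟩) := rfl
          _ ≤ stmt13a l p.1 * p.2.1 + stmt13b l p.1 * p.2.2
              + (stmt13a l p.1 + stmt13b l p.1) := h8
          _ ≤ x := by linarith
      rw [Finset.mem_range]
      by_contra hk2
      push_neg at hk2
      have := hgmono hk2
      linarith
    have hinj : Set.InjOn (fun p => e.symm (stmt13Phi p))
        ((Finset.univ : Finset (Bool × Bool)).sigma
          (fun σ => stmt13T (stmt13a l σ) (stmt13b l σ) (x - K))) :=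
      fun u _ v _ h => stmt13Phi_inj (e.symm.injective h)
    have hle := Finset.card_le_card_of_injOn _ hmaps hinj
    rw [Finset.card_sigma, Finset.card_range] at hle
    omega
  have hsc : 0 < Real.sqrt c := Real.sqrt_pos.mpr hc
  -- lower estimate on g
  have low : ∀ k : ℕ, Real.sqrt k / Real.sqrt c - B ≤ g k := by
    intro k
    have h1 := star1 k (g k) le_rfl
    have h3 : ((k : ℝ)) + 1 ≤ ∑ σ : Bool × Bool,
        ((stmt13T (stmt13a l σ) (stmt13b l σ) (g k)).card : ℝ) := by
      rw [← Nat.cast_sum]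
      exact_mod_cast h1
    have h4 : ∑ σ : Bool × Bool, ((stmt13T (stmt13a l σ) (stmt13b l σ) (g k)).card : ℝ)
        ≤ ∑ σ : Bool × Bool, (g k + B) ^ 2 * (2 * stmt13a l σ * stmt13b l σ)⁻¹ := by
      refine Finset.sum_le_sum fun σ _ => ?_
      refine (stmt13T_up (ha σ) (hb σ) (hg0 k)).trans ?_
      rw [div_eq_mul_inv]
      have h5 : (g k + (stmt13a l σ + 2 * stmt13b l σ)) ^ 2 ≤ (g k + B) ^ 2 := by
        have h6 := hBσ σ
        have h7 := hg0 k
        have h8 := ha σ; have h9 := hb σ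
        nlinarith
      exact mul_le_mul_of_nonneg_right h5 (inv_nonneg.mpr (by nlinarith [ha σ, hb σ]))
    have h6 : ∑ σ : Bool × Bool, (g k + B) ^ 2 * (2 * stmt13a l σ * stmt13b l σ)⁻¹
        = c * (g k + B) ^ 2 := by
      rw [← Finset.mul_sum, hsum_c, mul_comm]
    have h2 : ((k : ℝ)) < c * (g k + B) ^ 2 := by linarith
    have h7 : Real.sqrt k ≤ Real.sqrt c * (g k + B) := by
      have h8 := Real.sqrt_le_sqrt h2.le
      rwa [Real.sqrt_mul hc.le, Real.sqrt_sq (by linarith [hg0 k])] at h8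
    have h9 : Real.sqrt k / Real.sqrt c ≤ g k + B :=
      (div_le_iff₀ hsc).mpr (by linarith [mul_comm (Real.sqrt c) (g k + B)])
    linarith
  -- upper estimate on g
  have up : ∀ k : ℕ, g k ≤ K + Real.sqrt ((k : ℝ) + 1) / Real.sqrt c := by
    intro k
    apply star2
    have harg : K + Real.sqrt ((k : ℝ) + 1) / Real.sqrt c - K
        = Real.sqrt ((k : ℝ) + 1) / Real.sqrt c := by ring
    rw [harg]
    set y : ℝ := Real.sqrt ((k : ℝ) + 1) / Real.sqrt c with hy_def
    have hy0 : 0 ≤ y := by positivity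
    have hyc : c * y ^ 2 = (k : ℝ) + 1 := by
      rw [hy_def, div_pow, Real.sq_sqrt (by positivity), Real.sq_sqrt hc.le]
      field_simp
    have h1 : ∑ σ : Bool × Bool, y ^ 2 * (2 * stmt13a l σ * stmt13b l σ)⁻¹
        ≤ ∑ σ : Bool × Bool, ((stmt13T (stmt13a l σ) (stmt13b l σ) y).card : ℝ) := by
      refine Finset.sum_le_sum fun σ _ => ?_
      have h2 := stmt13T_low (ha σ) (hb σ) hy0
      rw [div_eq_mul_inv] at h2
      exact h2
    have h3 : ∑ σ : Bool × Bool, y ^ 2 * (2 * stmt13a l σ * stmt13b l σ)⁻¹ = c * y ^ 2 := by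
      rw [← Finset.mul_sum, hsum_c, mul_comm]
    have h4 : ((k : ℝ)) < ∑ σ : Bool × Bool,
        ((stmt13T (stmt13a l σ) (stmt13b l σ) y).card : ℝ) := by
      rw [h3, hyc] at h1
      linarith
    rw [← Nat.cast_sum] at h4
    exact_mod_cast h4
  -- limits
  have hsqrtk : Filter.Tendsto (fun k : ℕ => Real.sqrt k) Filter.atTop Filter.atTop := by
    rw [Filter.tendsto_atTop_atTop]
    intro C
    refine ⟨⌈C⌉₊ ^ 2, fun k hk => ?_⟩
    have h1 : (C : ℝ) ≤ Real.sqrt ((⌈C⌉₊ : ℝ) ^ 2) := by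
      rw [Real.sqrt_sq (Nat.cast_nonneg _)]
      exact Nat.le_ceil C
    refine h1.trans (Real.sqrt_le_sqrt ?_)
    exact_mod_cast hk
  have hinv : Filter.Tendsto (fun k : ℕ => (Real.sqrt k)⁻¹) Filter.atTop (nhds 0) :=
    hsqrtk.inv_tendsto_atTop
  -- rewrite the target constant
  have hEq : (1 / 2 : ℝ) * ∑ σ : Bool × Bool,
      (if (l σ).1 * (l σ).2 ≠ 0 then
        (Real.log (‖(l σ).1‖) * Real.log (‖(l σ).2‖))⁻¹ else 0) = c := by
    rw [hc_def]
    congr 1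
    refine Finset.sum_congr rfl fun σ _ => ?_
    rw [if_pos (mul_ne_zero (hz σ).1 (hz σ).2)]
    unfold stmt13a stmt13b
    congr 1
    ring
  rw [hEq]
  have hfun : (fun k : ℕ => -Real.log (‖s k‖) / Real.sqrt k)
      = fun k : ℕ => g k / Real.sqrt k := by
    funext k
    rw [hflog]
  rw [hfun]
  have hlowlim : Filter.Tendsto (fun k : ℕ => (Real.sqrt c)⁻¹ - B * (Real.sqrt k)⁻¹)
      Filter.atTop (nhds ((Real.sqrt c)⁻¹)) := by
    simpa using tendsto_const_nhds.sub (hinv.const_mul B)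
  have huplim : Filter.Tendsto
      (fun k : ℕ => (Real.sqrt c)⁻¹ + (K + (Real.sqrt c)⁻¹) * (Real.sqrt k)⁻¹)
      Filter.atTop (nhds ((Real.sqrt c)⁻¹)) := by
    simpa using tendsto_const_nhds.add (hinv.const_mul (K + (Real.sqrt c)⁻¹))
  refine tendsto_of_tendsto_of_tendsto_of_le_of_le' hlowlim huplim ?_ ?_
  · filter_upwards [Filter.eventually_ge_atTop 1] with k hk
    have hks : 0 < Real.sqrt k := Real.sqrt_pos.mpr (by exact_mod_cast Nat.pos_of_ne_zero (by omega))
    have h1 := low k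
    have h2 : (Real.sqrt k / Real.sqrt c - B) / Real.sqrt k
        = (Real.sqrt c)⁻¹ - B * (Real.sqrt k)⁻¹ := by
      field_simp
    rw [← h2]
    gcongr
  · filter_upwards [Filter.eventually_ge_atTop 1] with k hk
    have hks : 0 < Real.sqrt k := Real.sqrt_pos.mpr (by exact_mod_cast Nat.pos_of_ne_zero (by omega))
    have h1 := up k
    have hstep : Real.sqrt ((k : ℝ) + 1) ≤ Real.sqrt k + 1 := by
      have h3 : ((k : ℝ) + 1) ≤ (Real.sqrt k + 1) ^ 2 := by
        nlinarith [Real.sq_sqrt (Nat.cast_nonneg (α := ℝ) k), Real.sqrt_nonneg ((k : ℝ))]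
      calc Real.sqrt ((k : ℝ) + 1) ≤ Real.sqrt ((Real.sqrt k + 1) ^ 2) := Real.sqrt_le_sqrt h3
        _ = Real.sqrt k + 1 := Real.sqrt_sq (by positivity)
    have h4 : g k ≤ K + (Real.sqrt k + 1) / Real.sqrt c := by
      refine h1.trans ?_
      gcongr
    have h5 : (K + (Real.sqrt k + 1) / Real.sqrt c) / Real.sqrt k
        = (Real.sqrt c)⁻¹ + (K + (Real.sqrt c)⁻¹) * (Real.sqrt k)⁻¹ := by
      field_simp
      ring
    rw [← h5]
    gcongr
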